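/- Let k be a field and let A, B be commutative k-algebras. Let I_A = ker(μ_A : A ⊗_k A → A), I_B = ker(μ_B : B ⊗_k B → B), and let I denote the kernel of the multiplication map (A ⊗_k B) ⊗_k (A ⊗_k B) → A ⊗_k B, regarded as an ideal of (A ⊗_k A) ⊗_k (B ⊗_k B) via the middle-swap isomorphism (A ⊗ B) ⊗ (A ⊗ B) ≅ (A ⊗ A) ⊗ (B ⊗ B). Then there is a short exact sequence of (A ⊗ A) ⊗ (B ⊗ B)-modules 0 → I_A ⊗_k (B ⊗_k B) → I → A ⊗_k I_B → 0, where the first map is induced by the inclusions I_A ⊆ A ⊗ A and B ⊗ B ⊆ B ⊗ B, and the second map is induced by μ_A : A ⊗ A → A on the first factor and the inclusion I_B ⊆ B ⊗ B on the second (here A is an (A ⊗ A)-module via μ_A). -/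

import Mathlib

open TensorProduct

variable (k : Type*) [Field k]
variable (A : Type*) [CommRing A] [Algebra k A]
variable (B : Type*) [CommRing B] [Algebra k B]

/-- Let `k` be a field and `A`, `B` commutative `k`-algebras.  Let
`I_A = ker (μ_A : A ⊗ A → A)`, `I_B = ker (μ_B : B ⊗ B → B)`, and let `I` be the kernel of the
multiplication map of `A ⊗ B`, regarded as an ideal of `(A ⊗ A) ⊗ (B ⊗ B)` via the middle-swap
isomorphism.  Then there is a short exact sequence
`0 → I_A ⊗_k (B ⊗ B) → I → A ⊗_k I_B → 0`,
where the first map `jA` is induced by the inclusions `I_A ⊆ A ⊗ A` and `B ⊗ B ⊆ B ⊗ B`, and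
the second map is induced by `μ_A ⊗ id` (with values in `A ⊗ I_B ⊆ A ⊗ (B ⊗ B)`, the inclusion
being `jB`). -/
theorem diagonal_ideal_ses
    (IA : Ideal (A ⊗[k] A)) (hIA : IA = RingHom.ker (Algebra.TensorProduct.lmul' k (S := A)))
    (IB : Ideal (B ⊗[k] B)) (hIB : IB = RingHom.ker (Algebra.TensorProduct.lmul' k (S := B)))
    (I : Ideal ((A ⊗[k] A) ⊗[k] (B ⊗[k] B)))
    (hI : I = Ideal.map (Algebra.TensorProduct.tensorTensorTensorComm k k k k A B A B)
      (RingHom.ker (Algebra.TensorProduct.lmul' k (S := A ⊗[k] B))))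
    (jA : (↥IA ⊗[k] (B ⊗[k] B)) →ₗ[k] (A ⊗[k] A) ⊗[k] (B ⊗[k] B))
    (hjA : jA = TensorProduct.map ((Submodule.subtype IA).restrictScalars k) LinearMap.id)
    (Φ : ((A ⊗[k] A) ⊗[k] (B ⊗[k] B)) →ₗ[k] A ⊗[k] (B ⊗[k] B))
    (hΦ : Φ = TensorProduct.map (Algebra.TensorProduct.lmul' k (S := A)).toLinearMap
      LinearMap.id)
    (jB : (A ⊗[k] ↥IB) →ₗ[k] A ⊗[k] (B ⊗[k] B))
    (hjB : jB = TensorProduct.map LinearMap.id ((Submodule.subtype IB).restrictScalars k)) :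
    Function.Injective jA ∧
    (∀ y ∈ LinearMap.range jA, y ∈ I) ∧
    (∀ x ∈ I, Φ x ∈ LinearMap.range jB) ∧
    (∀ x ∈ I, (Φ x = 0 ↔ x ∈ LinearMap.range jA)) ∧
    (∀ w : A ⊗[k] ↥IB, ∃ x ∈ I, Φ x = jB w) := by
  -- notation
  set μA : (A ⊗[k] A) →ₗ[k] A := (Algebra.TensorProduct.lmul' k (S := A)).toLinearMap with hμA
  set μB : (B ⊗[k] B) →ₗ[k] B := (Algebra.TensorProduct.lmul' k (S := B)).toLinearMap with hμB
  set fA : ↥IA →ₗ[k] (A ⊗[k] A) := (Submodule.subtype IA).restrictScalars k with hfA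
  set fB : ↥IB →ₗ[k] (B ⊗[k] B) := (Submodule.subtype IB).restrictScalars k with hfB
  set ΦB : (A ⊗[k] (B ⊗[k] B)) →ₗ[k] A ⊗[k] B := μB.lTensor A with hΦB
  -- base exact sequences
  have exA : Function.Exact fA μA := by
    intro y
    constructor
    · intro h
      exact ⟨⟨y, by rw [hIA]; exact h⟩, rfl⟩
    · rintro ⟨⟨z, hz⟩, rfl⟩
      rw [hIA] at hz
      exact hz
  have exB : Function.Exact fB μB := by
    intro y
    constructor
    · intro h
      exact ⟨⟨y, by rw [hIB]; exact h⟩, rfl⟩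
    · rintro ⟨⟨z, hz⟩, rfl⟩
      rw [hIB] at hz
      exact hz
  -- tensored exact sequences
  have hjA' : jA = fA.rTensor (B ⊗[k] B) := hjA
  have hΦ' : Φ = μA.rTensor (B ⊗[k] B) := hΦ
  have hjB' : jB = fB.lTensor A := hjB
  have exAT : Function.Exact jA Φ := by
    rw [hjA', hΦ']
    exact Module.Flat.rTensor_exact (B ⊗[k] B) exA
  have exBT : Function.Exact jB ΦB := by
    rw [hjB', hΦB]
    exact Module.Flat.lTensor_exact A exB
  -- membership in I
  have hcomm : (Algebra.TensorProduct.lmul' k (S := A ⊗[k] B)).toLinearMap ∘ₗ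
      ((Algebra.TensorProduct.tensorTensorTensorComm k k k k A B A B).symm.toLinearMap) = ΦB ∘ₗ Φ := by
    rw [hΦ, hΦB]
    ext a a' b b'
    simp [Algebra.TensorProduct.tensorTensorTensorComm_symm,
      Algebra.TensorProduct.tensorTensorTensorComm_tmul,
      Algebra.TensorProduct.lmul'_apply_tmul, Algebra.TensorProduct.tmul_mul_tmul, hμA, hμB]
  have hcomm' : ∀ x, (Algebra.TensorProduct.lmul' k (S := A ⊗[k] B))
      ((Algebra.TensorProduct.tensorTensorTensorComm k k k k A B A B).symm x) = ΦB (Φ x) :=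
    fun x => congrFun (congrArg (fun f => f.toFun) hcomm) x
  have hmem : ∀ x, x ∈ I ↔ ΦB (Φ x) = 0 := by
    intro x
    rw [hI, Ideal.mem_map_of_equiv]
    constructor
    · rintro ⟨z, hz, rfl⟩
      rw [← hcomm', AlgEquiv.symm_apply_apply]
      exact hz
    · intro h
      refine ⟨(Algebra.TensorProduct.tensorTensorTensorComm k k k k A B A B).symm x, ?_,
        AlgEquiv.apply_symm_apply _ _⟩
      rw [RingHom.mem_ker]
      rw [← hcomm'] at h
      exact h
  refine ⟨?_, ?_, ?_, ?_, ?_⟩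
  · rw [hjA']
    exact Module.Flat.rTensor_preserves_injective_linearMap fA (Submodule.injective_subtype IA)
  · rintro y ⟨w, rfl⟩
    rw [hmem, exAT.apply_apply_eq_zero w, map_zero]
  · intro x hx
    rw [hmem] at hx
    obtain ⟨w, hw⟩ := (exBT (Φ x)).mp hx
    exact ⟨w, hw⟩
  · intro x _
    exact exAT x
  · intro w
    have hμAsurj : Function.Surjective μA := fun a =>
      ⟨a ⊗ₜ 1, by simp [hμA, Algebra.TensorProduct.lmul'_apply_tmul]⟩
    have hsurj : Function.Surjective Φ := by
      rw [hΦ']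
      exact LinearMap.rTensor_surjective _ hμAsurj
    obtain ⟨x, hx⟩ := hsurj (jB w)
    refine ⟨x, ?_, hx⟩
    rw [hmem, hx]
    exact exBT.apply_apply_eq_zero w
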